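/- Let p ∈ ℝ[x_1,…,x_n] be invariant under the symmetric group S_n. Then p belongs to the degree-2d truncated quadratic module M_{n,2d}(g) if and only if there exist a positive semidefinite real symmetric matrix Q indexed by the monomials of degree at most d that is S_n-invariant (Q_{πu,πv} = Q_{u,v} for all π ∈ S_n and monomials u, v) and a positive semidefinite real symmetric matrix R indexed by the monomials of degree at most d-1 that is Stab_{S_n}(n)-invariant, such that p = [x]_d^T Q [x]_d + Σ_{i=1}^n ((i n)·([x]_{d-1}^T R [x]_{d-1}))·(x_i - x_i²), where [x]_d denotes the column vector of all monomials in x_1,…,x_n of total degree at most d. -/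

import Mathlib

open MvPolynomial

/-- A polynomial is a sum of squares. -/
def IsSOS {n : ℕ} (p : MvPolynomial (Fin n) ℝ) : Prop :=
  ∃ (k : ℕ) (q : Fin k → MvPolynomial (Fin n) ℝ), p = ∑ j, (q j) ^ 2

/-- Membership in the degree-`2d` truncated quadratic module `M_{n,2d}(g)` of the
hypercube, where `g_i = x_i - x_i^2`. -/
def InQuadModule (n d : ℕ) (p : MvPolynomial (Fin n) ℝ) : Prop :=
  ∃ (σ₀ : MvPolynomial (Fin n) ℝ) (σ : Fin n → MvPolynomial (Fin n) ℝ),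
    IsSOS σ₀ ∧ (∀ i, IsSOS (σ i)) ∧
    σ₀.totalDegree ≤ 2 * d ∧ (∀ i, (σ i).totalDegree ≤ 2 * d - 2) ∧
    p = σ₀ + ∑ i, σ i * (X i - (X i) ^ 2)


/-- Index set for the monomials of total degree at most `d` in `N` variables:
exponent vectors with entries (bounded by `d`) summing to at most `d`. -/
def MonIdx (N d : ℕ) : Type := {m : Fin N → Fin (d + 1) // ∑ i, (m i : ℕ) ≤ d}

instance (N d : ℕ) : Fintype (MonIdx N d) := by
  unfold MonIdx; infer_instance

instance (N d : ℕ) : DecidableEq (MonIdx N d) := by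
  unfold MonIdx; infer_instance

/-- The monomial associated to an index. -/
noncomputable def monOf {N d : ℕ} (m : MonIdx N d) : MvPolynomial (Fin N) ℝ :=
  ∏ i, (X i) ^ (m.1 i : ℕ)

/-- Action of a permutation `π` on a monomial index, so that
`rename π (monOf m) = monOf (permIdx π m)`. -/
def permIdx {N d : ℕ} (π : Equiv.Perm (Fin N)) (m : MonIdx N d) : MonIdx N d :=
  ⟨fun j => m.1 (π⁻¹ j), by
    simpa using (Equiv.sum_comp π⁻¹ (fun i => ((m.1 i : ℕ)))).le.trans m.2⟩

namespace SymGram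

open Matrix

variable {N D : ℕ}

noncomputable def toF (m : MonIdx N D) : Fin N →₀ ℕ :=
  Finsupp.equivFunOnFinite.symm fun i => (m.1 i : ℕ)

@[simp] lemma toF_apply (m : MonIdx N D) (i : Fin N) : toF m i = (m.1 i : ℕ) := rfl

lemma toF_inj {a b : MonIdx N D} (h : toF a = toF b) : a = b := by
  apply Subtype.ext; funext i
  have := congrArg (fun f => f i) h
  simp only [toF_apply] at this
  exact Fin.val_injective this

lemma sumF (f : Fin N →₀ ℕ) : (f.sum fun _ e => e) = ∑ i : Fin N, f i := by
  rw [Finsupp.sum]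
  exact Finset.sum_subset (Finset.subset_univ _)
    (fun i _ hi => Finsupp.notMem_support_iff.mp hi)

lemma monOf_eq (m : MonIdx N D) : monOf m = monomial (toF m) (1:ℝ) := by
  rw [← prod_X_pow_eq_monomial]
  exact (Finset.prod_subset (Finset.subset_univ _)
    (fun i _ hi => by
      rw [show ((m.1 i : ℕ)) = toF m i from rfl, Finsupp.notMem_support_iff.mp hi,
        pow_zero])).symm

lemma totalDegree_monOf (m : MonIdx N D) : (monOf m).totalDegree ≤ D := by
  rw [monOf_eq, totalDegree_monomial _ one_ne_zero, sumF]
  simpa using m.2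

def idxOf (f : Fin N →₀ ℕ) (h : ∑ i, f i ≤ D) : MonIdx N D :=
  ⟨fun i => ⟨f i, Nat.lt_succ_of_le
      ((Finset.single_le_sum (fun _ _ => Nat.zero_le _) (Finset.mem_univ i)).trans h)⟩,
    by simpa using h⟩

@[simp] lemma toF_idxOf (f : Fin N →₀ ℕ) (h : ∑ i, f i ≤ D) : toF (idxOf f h) = f := by
  ext i; rfl

lemma rename_monOf (π : Equiv.Perm (Fin N)) (m : MonIdx N D) :
    rename π (monOf m) = monOf (permIdx π m) := by
  rw [monOf_eq, monOf_eq, rename_monomial]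
  have h : Finsupp.mapDomain π (toF m) = toF (permIdx π m) := by
    rw [← Finsupp.equivMapDomain_eq_mapDomain]
    ext j
    simp [Finsupp.equivMapDomain_apply, permIdx]
    rfl
  rw [h]

lemma permIdx_one (m : MonIdx N D) : permIdx 1 m = m := by
  apply Subtype.ext; funext j; simp [permIdx]

lemma permIdx_mul (π ρ : Equiv.Perm (Fin N)) (m : MonIdx N D) :
    permIdx (π * ρ) m = permIdx π (permIdx ρ m) := by
  apply Subtype.ext; funext j
  show m.1 ((π * ρ)⁻¹ j) = m.1 (ρ⁻¹ (π⁻¹ j))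
  rw [_root_.mul_inv_rev]; rfl

lemma permIdx_cancel (π : Equiv.Perm (Fin N)) (m : MonIdx N D) :
    permIdx π⁻¹ (permIdx π m) = m := by
  rw [← permIdx_mul, inv_mul_cancel, permIdx_one]

lemma permIdx_cancel' (π : Equiv.Perm (Fin N)) (m : MonIdx N D) :
    permIdx π (permIdx π⁻¹ m) = m := by
  rw [← permIdx_mul, mul_inv_cancel, permIdx_one]

def permIdxE (π : Equiv.Perm (Fin N)) : MonIdx N D ≃ MonIdx N D where
  toFun := permIdx π
  invFun := permIdx π⁻¹
  left_inv := permIdx_cancel π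
  right_inv := permIdx_cancel' π


noncomputable def vPoly (c : MonIdx N D → ℝ) : MvPolynomial (Fin N) ℝ :=
  ∑ u, C (c u) * monOf u

noncomputable def gPoly (Q : Matrix (MonIdx N D) (MonIdx N D) ℝ) : MvPolynomial (Fin N) ℝ :=
  ∑ u, ∑ v, C (Q u v) * monOf u * monOf v

lemma totalDegree_vPoly (c : MonIdx N D → ℝ) : (vPoly c).totalDegree ≤ D := by
  refine totalDegree_finsetSum_le fun u _ => ?_
  calc (C (c u) * monOf u).totalDegree ≤ (C (c u)).totalDegree + (monOf u).totalDegree :=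
        totalDegree_mul _ _
    _ ≤ D := by simpa [totalDegree_C] using totalDegree_monOf u

lemma totalDegree_gPoly (Q : Matrix (MonIdx N D) (MonIdx N D) ℝ) :
    (gPoly Q).totalDegree ≤ 2 * D := by
  refine totalDegree_finsetSum_le fun u _ => ?_
  refine totalDegree_finsetSum_le fun v _ => ?_
  calc (C (Q u v) * monOf u * monOf v).totalDegree
      ≤ (C (Q u v) * monOf u).totalDegree + (monOf v).totalDegree := totalDegree_mul _ _
    _ ≤ ((C (Q u v)).totalDegree + (monOf u).totalDegree) + (monOf v).totalDegree := by
        exact Nat.add_le_add_right (totalDegree_mul _ _) _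
    _ ≤ 2 * D := by
        have h1 := totalDegree_monOf u
        have h2 := totalDegree_monOf v
        simp only [totalDegree_C]
        omega

lemma vPoly_coeff {p : MvPolynomial (Fin N) ℝ} (hp : p.totalDegree ≤ D) :
    vPoly (fun u : MonIdx N D => coeff (toF u) p) = p := by
  apply MvPolynomial.ext
  intro f
  have hmon : ∀ u : MonIdx N D,
      C (coeff (toF u) p) * monOf u = monomial (toF u) (coeff (toF u) p) := fun u => by
    rw [monOf_eq, C_mul_monomial, mul_one]
  rw [vPoly]
  simp_rw [hmon]
  rw [coeff_sum]
  simp_rw [coeff_monomial]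
  by_cases h : ∑ i, f i ≤ D
  · rw [Finset.sum_eq_single (idxOf f h)]
    · rw [toF_idxOf, if_pos rfl]
    · intro u _ hne
      rw [if_neg]
      intro he
      exact hne (toF_inj (he.trans (toF_idxOf f h).symm))
    · intro hmem; exact absurd (Finset.mem_univ _) hmem
  · have h0 : coeff f p = 0 := by
      apply coeff_eq_zero_of_totalDegree_lt
      have : ∑ i ∈ f.support, f i = ∑ i, f i := Finset.sum_subset (Finset.subset_univ _)
        (fun i _ hi => Finsupp.notMem_support_iff.mp hi)
      rw [this]
      omega
    rw [h0]
    apply Finset.sum_eq_zero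
    intro u _
    rw [if_neg]
    intro he
    apply h
    rw [← he]
    simpa using u.2

lemma gPoly_conjT {ι : Type} [Fintype ι] (B : Matrix ι (MonIdx N D) ℝ) :
    gPoly (Bᴴ * B) = ∑ k : ι, (vPoly fun u => B k u) ^ 2 := by
  unfold gPoly vPoly
  have h : ∀ u v : MonIdx N D, C ((Bᴴ * B) u v) * monOf u * monOf v
      = ∑ k : ι, (C (B k u) * monOf u) * (C (B k v) * monOf v) := by
    intro u v
    rw [Matrix.mul_apply]
    simp only [Matrix.conjTranspose_apply, star_trivial, map_sum, Finset.sum_mul]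
    refine Finset.sum_congr rfl fun k _ => ?_
    rw [_root_.map_mul]; ring
  simp_rw [h, sq, Finset.sum_mul_sum]
  exact (Finset.sum_congr rfl fun u _ => Finset.sum_comm).trans Finset.sum_comm

open scoped MatrixOrder Matrix.Norms.L2Operator in
lemma isSOS_gPoly {Q : Matrix (MonIdx N D) (MonIdx N D) ℝ} (hQ : Q.PosSemidef) :
    IsSOS (gPoly Q) := by
  obtain ⟨B, rfl⟩ := CStarAlgebra.nonneg_iff_eq_star_mul_self.mp hQ.nonneg
  rw [Matrix.star_eq_conjTranspose, gPoly_conjT]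
  refine ⟨Fintype.card (MonIdx N D), fun j => vPoly fun u => B ((Fintype.equivFin _).symm j) u, ?_⟩
  exact (Equiv.sum_comp (Fintype.equivFin (MonIdx N D)).symm _).symm

lemma exists_gram {k : ℕ} (q : Fin k → MvPolynomial (Fin N) ℝ)
    (hq : ∀ j, (q j).totalDegree ≤ D) :
    ∃ Q : Matrix (MonIdx N D) (MonIdx N D) ℝ, Q.PosSemidef ∧ gPoly Q = ∑ j, (q j) ^ 2 := by
  let B : Matrix (Fin k) (MonIdx N D) ℝ := fun j u => coeff (toF u) (q j)
  refine ⟨Bᴴ * B, Matrix.posSemidef_conjTranspose_mul_self _, ?_⟩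
  rw [gPoly_conjT]
  exact Finset.sum_congr rfl fun j _ => congrArg (· ^ 2) (vPoly_coeff (hq j))


lemma degree_add (a b : Fin N →₀ ℕ) : (a + b).degree = a.degree + b.degree := by
  have h : ∀ f : Fin N →₀ ℕ, f.degree = ∑ i, f i := fun f =>
    Finset.sum_subset (Finset.subset_univ _) (fun i _ hi => Finsupp.notMem_support_iff.mp hi)
  simp [h, Finset.sum_add_distrib]

lemma coeff_zero_of_degree_gt {f : MvPolynomial (Fin N) ℝ} {M : ℕ} (hf : f.totalDegree ≤ M)
    {a : Fin N →₀ ℕ} (ha : M < a.degree) : coeff a f = 0 := by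
  apply coeff_eq_zero_of_totalDegree_lt
  exact lt_of_le_of_lt hf ha

lemma hc_mul_top {f g : MvPolynomial (Fin N) ℝ} {M : ℕ}
    (hf : f.totalDegree ≤ M) (hg : g.totalDegree ≤ M) :
    homogeneousComponent (2 * M) (f * g) =
      homogeneousComponent M f * homogeneousComponent M g := by
  apply MvPolynomial.ext
  intro e
  rw [coeff_homogeneousComponent]
  by_cases he : e.degree = 2 * M
  · rw [if_pos he, coeff_mul, coeff_mul]
    refine Finset.sum_congr rfl fun ab hab => ?_
    obtain ⟨a, b⟩ := ab
    rw [Finset.HasAntidiagonal.mem_antidiagonal] at hab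
    have hdeg : a.degree + b.degree = 2 * M := by rw [← degree_add, hab, he]
    rw [coeff_homogeneousComponent, coeff_homogeneousComponent]
    by_cases ha : a.degree = M
    · have hb : b.degree = M := by omega
      rw [if_pos ha, if_pos hb]
    · rw [if_neg ha]
      rcases lt_or_gt_of_ne ha with h1 | h1
      · have : M < b.degree := by omega
        rw [coeff_zero_of_degree_gt hg this, mul_zero, zero_mul]
      · rw [coeff_zero_of_degree_gt hf h1, zero_mul, zero_mul]
  · rw [if_neg he]
    have : (homogeneousComponent M f * homogeneousComponent M g).IsHomogeneous (2 * M) := by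
      have := (homogeneousComponent_isHomogeneous M f).mul
        (homogeneousComponent_isHomogeneous M g)
      rwa [two_mul]
    exact (this.coeff_eq_zero he).symm

lemma sum_sq_zero {k : ℕ} {f : Fin k → MvPolynomial (Fin N) ℝ}
    (h : ∑ j, (f j) ^ 2 = 0) (j : Fin k) : f j = 0 := by
  apply MvPolynomial.funext
  intro x
  have hx : ∑ j, (eval x (f j)) ^ 2 = 0 := by
    have := congrArg (eval x) h
    simpa [map_sum] using this
  have h0 : ∀ i ∈ Finset.univ, (0:ℝ) ≤ (eval x (f i)) ^ 2 := fun i _ => sq_nonneg _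
  have := (Finset.sum_eq_zero_iff_of_nonneg h0).mp hx j (Finset.mem_univ j)
  simpa using pow_eq_zero_iff (n := 2) (by norm_num) |>.mp this

lemma hc_top_ne_zero {p : MvPolynomial (Fin N) ℝ} (hp : p ≠ 0) :
    homogeneousComponent p.totalDegree p ≠ 0 := by
  obtain ⟨e, he, hdeg⟩ := p.support.exists_mem_eq_sup
    (MvPolynomial.support_nonempty.mpr hp) fun s => s.sum fun _ n => n
  intro h0
  have : coeff e (homogeneousComponent p.totalDegree p) = coeff e p := by
    rw [coeff_homogeneousComponent, if_pos]
    show (e.sum fun _ n => n) = p.totalDegree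
    rw [MvPolynomial.totalDegree, hdeg]
  rw [h0] at this
  exact (MvPolynomial.mem_support_iff.mp he) (by simpa using this.symm)

lemma sos_deg_bound {k M : ℕ} {q : Fin k → MvPolynomial (Fin N) ℝ}
    (h : (∑ j, (q j) ^ 2).totalDegree ≤ 2 * M) (j : Fin k) : (q j).totalDegree ≤ M := by
  by_contra hj
  push_neg at hj
  obtain ⟨j1, -, hj1⟩ := Finset.univ.exists_mem_eq_sup ⟨j, Finset.mem_univ j⟩
    fun i => (q i).totalDegree
  have hle : ∀ i : Fin k, (q i).totalDegree ≤ (q j1).totalDegree := fun i =>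
    hj1 ▸ Finset.le_sup (f := fun i => (q i).totalDegree) (Finset.mem_univ i)
  have hMT : M < (q j1).totalDegree := lt_of_lt_of_le hj (hle j)
  have key : ∀ i : Fin k, homogeneousComponent (2 * (q j1).totalDegree) ((q i) ^ 2)
      = (homogeneousComponent (q j1).totalDegree (q i)) ^ 2 := fun i => by
    rw [sq, sq]
    exact hc_mul_top (hle i) (hle i)
  have hz : ∑ i, (homogeneousComponent (q j1).totalDegree (q i)) ^ 2 = 0 := by
    have h2 : homogeneousComponent (2 * (q j1).totalDegree) (∑ i, (q i) ^ 2) = 0 :=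
      homogeneousComponent_eq_zero _ _ (by omega)
    rw [map_sum] at h2
    simp_rw [key] at h2
    exact h2
  have hne : q j1 ≠ 0 := fun h0 => by
    rw [h0, totalDegree_zero] at hMT; omega
  exact hc_top_ne_zero hne (sum_sq_zero hz j1)


def actM (π : Equiv.Perm (Fin N)) (Q : Matrix (MonIdx N D) (MonIdx N D) ℝ) :
    Matrix (MonIdx N D) (MonIdx N D) ℝ :=
  fun u v => Q (permIdx π⁻¹ u) (permIdx π⁻¹ v)

lemma posSemidef_actM (π : Equiv.Perm (Fin N)) {Q : Matrix (MonIdx N D) (MonIdx N D) ℝ}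
    (hQ : Q.PosSemidef) : (actM π Q).PosSemidef := by
  have hs : ∀ a b, Q a b = Q b a := fun a b => by
    have := congrFun (congrFun hQ.1 b) a
    simpa [Matrix.conjTranspose_apply] using this
  refine Matrix.PosSemidef.of_dotProduct_mulVec_nonneg ?_ ?_
  · show _ = _
    ext u v
    simp [Matrix.conjTranspose_apply, actM]
    exact hs _ _
  · intro x
    have h := hQ.dotProduct_mulVec_nonneg (fun u => x (permIdx π u))
    have e : star x ⬝ᵥ (actM π Q) *ᵥ x
        = star (fun u => x (permIdx π u)) ⬝ᵥ Q *ᵥ (fun u => x (permIdx π u)) := by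
      simp only [dotProduct, Matrix.mulVec, Pi.star_apply, star_trivial,
        Finset.mul_sum]
      refine Fintype.sum_equiv (permIdxE (D := D) π⁻¹) _ _ fun u => ?_
      refine Fintype.sum_equiv (permIdxE (D := D) π⁻¹) _ _ fun v => ?_
      show x u * (actM π Q u v * x v) = x (permIdx π (permIdx π⁻¹ u)) *
        (Q (permIdx π⁻¹ u) (permIdx π⁻¹ v) * x (permIdx π (permIdx π⁻¹ v)))
      rw [permIdx_cancel', permIdx_cancel']
      rfl
    rw [e]; exact h

lemma gPoly_actM (π : Equiv.Perm (Fin N)) (Q : Matrix (MonIdx N D) (MonIdx N D) ℝ) :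
    gPoly (actM π Q) = rename π (gPoly Q) := by
  unfold gPoly
  rw [map_sum]
  refine Fintype.sum_equiv (permIdxE (D := D) π⁻¹) _ _ fun u => ?_
  rw [map_sum]
  refine Fintype.sum_equiv (permIdxE (D := D) π⁻¹) _ _ fun v => ?_
  rw [_root_.map_mul, _root_.map_mul, rename_C, rename_monOf, rename_monOf]
  show C (actM π Q u v) * monOf u * monOf v
      = C (Q (permIdx π⁻¹ u) (permIdx π⁻¹ v)) * monOf (permIdx π (permIdx π⁻¹ u)) *
        monOf (permIdx π (permIdx π⁻¹ v))
  rw [permIdx_cancel', permIdx_cancel']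
  rfl

lemma gPoly_smul (c : ℝ) (Q : Matrix (MonIdx N D) (MonIdx N D) ℝ) :
    gPoly (c • Q) = c • gPoly Q := by
  unfold gPoly
  rw [Finset.smul_sum]
  refine Finset.sum_congr rfl fun u _ => ?_
  rw [Finset.smul_sum]
  refine Finset.sum_congr rfl fun v _ => ?_
  rw [Matrix.smul_apply, smul_eq_mul, MvPolynomial.C_mul, MvPolynomial.smul_eq_C_mul]
  ring

lemma gPoly_sum {ι : Type} [Fintype ι] (M : ι → Matrix (MonIdx N D) (MonIdx N D) ℝ) :
    gPoly (∑ i, M i) = ∑ i, gPoly (M i) := by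
  unfold gPoly
  simp only [Matrix.sum_apply, map_sum, Finset.sum_mul]
  exact (Finset.sum_congr rfl fun u _ => Finset.sum_comm).trans Finset.sum_comm

lemma posSemidef_smul {A : Type} [Fintype A] {c : ℝ} (hc : 0 ≤ c)
    {M : Matrix A A ℝ} (h : M.PosSemidef) : (c • M).PosSemidef := by
  refine Matrix.PosSemidef.of_dotProduct_mulVec_nonneg ?_ ?_
  · show _ = _
    ext u v
    have := congrFun (congrFun h.1 u) v
    simp only [Matrix.conjTranspose_apply, star_trivial] at this
    simp [Matrix.conjTranspose_apply, Matrix.smul_apply, this]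
  · intro x
    rw [Matrix.smul_mulVec, dotProduct_smul, smul_eq_mul]
    exact mul_nonneg hc (h.dotProduct_mulVec_nonneg x)

lemma posSemidef_sum {ι A : Type} [Fintype ι] [Fintype A]
    {M : ι → Matrix A A ℝ} (h : ∀ i, (M i).PosSemidef) : (∑ i, M i).PosSemidef := by
  classical
  refine Finset.sum_induction M Matrix.PosSemidef (fun a b ha hb => ha.add hb)
    Matrix.PosSemidef.zero (fun i _ => h i)

lemma isSOS_rename {p : MvPolynomial (Fin N) ℝ} (h : IsSOS p) (π : Equiv.Perm (Fin N)) :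
    IsSOS (rename π p) := by
  obtain ⟨k, q, rfl⟩ := h
  exact ⟨k, fun j => rename π (q j), by simp [map_sum]⟩

end SymGram

open SymGram in
set_option maxHeartbeats 2000000 in
/-- Gram-matrix formulation of the symmetry-reduced hypercube certificate.  The
variables are indexed by `Fin (n+1)` and the distinguished index `n` is `Fin.last n`. -/
theorem symmetric_certificate_gram_iff (n d : ℕ) (p : MvPolynomial (Fin (n + 1)) ℝ)
    (hp : ∀ π : Equiv.Perm (Fin (n + 1)), rename π p = p) :
    InQuadModule (n + 1) d p ↔
      ∃ (Q : Matrix (MonIdx (n + 1) d) (MonIdx (n + 1) d) ℝ)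
        (R : Matrix (MonIdx (n + 1) (d - 1)) (MonIdx (n + 1) (d - 1)) ℝ),
        Q.PosSemidef ∧ R.PosSemidef ∧
        (∀ (π : Equiv.Perm (Fin (n + 1))) (u v : MonIdx (n + 1) d),
          Q (permIdx π u) (permIdx π v) = Q u v) ∧
        (∀ π : Equiv.Perm (Fin (n + 1)), π (Fin.last n) = Fin.last n →
          ∀ u v : MonIdx (n + 1) (d - 1), R (permIdx π u) (permIdx π v) = R u v) ∧
        p = (∑ u, ∑ v, C (Q u v) * monOf u * monOf v) +
            ∑ i, (rename (Equiv.swap i (Fin.last n))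
                    (∑ u, ∑ v, C (R u v) * monOf u * monOf v)) * (X i - (X i) ^ 2) := by

  classical
  constructor
  · rintro ⟨σ₀, σ, hS0, hSi, hd0, hdi, hpeq⟩
    obtain ⟨k0, q0, hq0⟩ := hS0
    have hq0d : ∀ j, (q0 j).totalDegree ≤ d := sos_deg_bound (hq0 ▸ hd0)
    obtain ⟨Q0, hQ0psd, hQ0g⟩ := exists_gram q0 hq0d
    rw [← hq0] at hQ0g
    have hRm : ∀ i, ∃ R : Matrix (MonIdx (n+1) (d-1)) (MonIdx (n+1) (d-1)) ℝ,
        R.PosSemidef ∧ gPoly R = σ i := by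
      intro i
      obtain ⟨k, q, hq⟩ := hSi i
      have hdeg : (∑ j, q j ^ 2).totalDegree ≤ 2 * (d - 1) := by
        rw [← hq]; have := hdi i; omega
      obtain ⟨R, h1, h2⟩ := exists_gram q (fun j => sos_deg_bound hdeg j)
      exact ⟨R, h1, h2.trans hq.symm⟩
    choose Rm hRmpsd hRmg using hRm
    have hcard : ((Fintype.card (Equiv.Perm (Fin (n+1))) : ℝ)) ≠ 0 :=
      Nat.cast_ne_zero.mpr Fintype.card_ne_zero
    set c : ℝ := ((Fintype.card (Equiv.Perm (Fin (n+1))) : ℝ))⁻¹ with hcdef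
    have hc0 : 0 ≤ c := by
      rw [hcdef]; positivity
    refine ⟨c • ∑ ρ : Equiv.Perm (Fin (n+1)), actM ρ Q0,
            c • ∑ ρ : Equiv.Perm (Fin (n+1)), actM ρ (Rm (ρ⁻¹ (Fin.last n))),
            posSemidef_smul hc0 (posSemidef_sum fun ρ => posSemidef_actM _ hQ0psd),
            posSemidef_smul hc0 (posSemidef_sum fun ρ => posSemidef_actM _ (hRmpsd _)),
            ?_, ?_, ?_⟩
    · intro π u v
      simp only [Matrix.smul_apply, Matrix.sum_apply, smul_eq_mul]
      congr 1
      refine Fintype.sum_equiv (Equiv.mulLeft π⁻¹) _ _ fun ρ => ?_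
      show actM ρ Q0 (permIdx π u) (permIdx π v) = actM (π⁻¹ * ρ) Q0 u v
      unfold actM
      rw [← permIdx_mul, ← permIdx_mul, _root_.mul_inv_rev, inv_inv]
    · intro π hπ u v
      simp only [Matrix.smul_apply, Matrix.sum_apply, smul_eq_mul]
      congr 1
      refine Fintype.sum_equiv (Equiv.mulLeft π⁻¹) _ _ fun ρ => ?_
      show actM ρ (Rm (ρ⁻¹ (Fin.last n))) (permIdx π u) (permIdx π v)
          = actM (π⁻¹ * ρ) (Rm ((π⁻¹ * ρ)⁻¹ (Fin.last n))) u v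
      have hidx : (π⁻¹ * ρ)⁻¹ (Fin.last n) = ρ⁻¹ (Fin.last n) := by
        rw [_root_.mul_inv_rev, inv_inv]
        show ρ⁻¹ (π (Fin.last n)) = ρ⁻¹ (Fin.last n)
        rw [hπ]
      rw [hidx]
      unfold actM
      rw [← permIdx_mul, ← permIdx_mul, _root_.mul_inv_rev, inv_inv]
    · show p = gPoly (c • ∑ ρ : Equiv.Perm (Fin (n+1)), actM ρ Q0) +
          ∑ i, (rename (Equiv.swap i (Fin.last n))
            (gPoly (c • ∑ ρ : Equiv.Perm (Fin (n+1)), actM ρ (Rm (ρ⁻¹ (Fin.last n)))))) *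
            (X i - (X i) ^ 2)
      have hQa : gPoly (c • ∑ ρ : Equiv.Perm (Fin (n+1)), actM ρ Q0)
          = c • ∑ ρ : Equiv.Perm (Fin (n+1)), rename ρ σ₀ := by
        rw [gPoly_smul, gPoly_sum]
        congr 1
        exact Finset.sum_congr rfl fun ρ _ => by rw [gPoly_actM, hQ0g]
      have hRa : gPoly (c • ∑ ρ : Equiv.Perm (Fin (n+1)), actM ρ (Rm (ρ⁻¹ (Fin.last n))))
          = c • ∑ ρ : Equiv.Perm (Fin (n+1)), rename ρ (σ (ρ⁻¹ (Fin.last n))) := by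
        rw [gPoly_smul, gPoly_sum]
        congr 1
        exact Finset.sum_congr rfl fun ρ _ => by rw [gPoly_actM, hRmg]
      have havg : p = c • ∑ ρ : Equiv.Perm (Fin (n+1)), rename ρ p := by
        simp_rw [hp]
        rw [Finset.sum_const, Finset.card_univ, ← Nat.cast_smul_eq_nsmul ℝ, smul_smul,
          hcdef, inv_mul_cancel₀ hcard, one_smul]
      have hre : ∀ ρ : Equiv.Perm (Fin (n+1)), rename ρ p
          = rename ρ σ₀ + ∑ i, rename ρ (σ i) * (X (ρ i) - X (ρ i) ^ 2) := by
        intro ρ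
        rw [hpeq, map_add, map_sum]
        congr 1
        refine Finset.sum_congr rfl fun i _ => ?_
        rw [_root_.map_mul, map_sub, map_pow, rename_X]
      rw [hQa, hRa, havg]
      have hswap : ∀ i : Fin (n+1),
          rename (Equiv.swap i (Fin.last n))
            (c • ∑ ρ : Equiv.Perm (Fin (n+1)), rename ρ (σ (ρ⁻¹ (Fin.last n))))
          = c • ∑ ρ : Equiv.Perm (Fin (n+1)), rename ρ (σ (ρ⁻¹ i)) := by
        intro i
        rw [_root_.map_smul, map_sum]
        congr 1
        refine Fintype.sum_equiv (Equiv.mulLeft (Equiv.swap i (Fin.last n))) _ _ fun ρ => ?_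
        simp only [Equiv.coe_mulLeft]
        rw [rename_rename, ← Equiv.Perm.coe_mul]
        have harg : (Equiv.swap i (Fin.last n) * ρ)⁻¹ i = ρ⁻¹ (Fin.last n) := by
          rw [_root_.mul_inv_rev]
          show ρ⁻¹ ((Equiv.swap i (Fin.last n))⁻¹ i) = ρ⁻¹ (Fin.last n)
          rw [Equiv.swap_inv, Equiv.swap_apply_left]
        rw [harg]
      have hinner : ∀ ρ : Equiv.Perm (Fin (n+1)),
          ∑ i, rename ρ (σ i) * (X (ρ i) - X (ρ i) ^ 2)
          = ∑ i, rename ρ (σ (ρ⁻¹ i)) * (X i - X i ^ 2) := by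
        intro ρ
        refine Fintype.sum_equiv ρ _ _ fun i => ?_
        rw [show ρ⁻¹ (ρ i) = i from ρ.symm_apply_apply i]
      simp_rw [hswap, hre, hinner]
      rw [Finset.sum_add_distrib, smul_add]
      congr 1
      rw [Finset.sum_comm, Finset.smul_sum]
      refine Finset.sum_congr rfl fun i _ => ?_
      rw [smul_mul_assoc, Finset.sum_mul]
  · rintro ⟨Q, R, hQ, hR, -, -, hpe⟩
    refine ⟨gPoly Q, fun i => rename (Equiv.swap i (Fin.last n)) (gPoly R),
      isSOS_gPoly hQ, fun i => isSOS_rename (isSOS_gPoly hR) _,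
      totalDegree_gPoly Q, fun i => ?_, hpe⟩
    calc (rename (⇑(Equiv.swap i (Fin.last n))) (gPoly R)).totalDegree
        ≤ (gPoly R).totalDegree := totalDegree_rename_le _ _
      _ ≤ 2 * (d - 1) := totalDegree_gPoly R
      _ ≤ 2 * d - 2 := by omega
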